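/- Let ρ ∈ (0,∞) and set ζ_f = (1+ρ)/(2ρ²), ζ_g = (1−ρ)/(2ρ²), ζ_a = ζ_f − 1, ζ_b = ζ_g − 1. There exist constants 0 < c ≤ C and u₀ > 0 such that for all u ≥ u₀: c ≤ f_ρ(1,u) · u^{−ζ_f} e^{2u} ≤ C, c ≤ g_ρ(1,u) · u^{−ζ_g} e^{2u} ≤ C, c ≤ a_ρ(1,u) · u^{−ζ_a} e^{2u} ≤ C, and c ≤ b_ρ(1,u) · u^{−ζ_b} e^{2u} ≤ C; and for all u ≤ −u₀ the same bounds hold with u replaced by |u| and with the exponent pairs (ζ_f, ζ_g) and (ζ_a, ζ_b) interchanged. The constants c, C, u₀ may be chosen uniformly for ρ in any compact subset of (0,∞). -/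

import Mathlib

open Real MeasureTheory Filter Set

noncomputable section

/-- `S` is the (unique) solution of the ODE
`S'(u) = -8ρ S(u)^{1+ρ}/(1+S(u)^ρ)²` with `S(0) = x`, valued in `(0,∞)`. -/
def IsSsol (ρ x : ℝ) (S : ℝ → ℝ) : Prop :=
  (∀ u : ℝ, 0 < S u) ∧ S 0 = x ∧
    ∀ u : ℝ, HasDerivAt S (-(8 * ρ * S u ^ (1 + ρ)) / (1 + S u ^ ρ) ^ 2) u

/-- `f_ρ(x,·)`, expressed in terms of the solution `S = S_ρ(x,·)`. -/
def fRho (ρ : ℝ) (S : ℝ → ℝ) (r : ℝ) : ℝ :=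
  Real.exp (2 * ∫ u in (0:ℝ)..r, (1 - 2 * (1 + (1 - ρ) * S u ^ ρ) / (1 + S u ^ ρ) ^ 2))

/-- `g_ρ(x,·)`, expressed in terms of the solution `S = S_ρ(x,·)`. -/
def gRho (ρ x : ℝ) (S : ℝ → ℝ) (r : ℝ) : ℝ :=
  x * Real.exp (-2 * ∫ u in (0:ℝ)..r,
      (1 - 2 * ((1 - ρ) * S u ^ ρ + S u ^ (2 * ρ)) / (1 + S u ^ ρ) ^ 2))

/-- `a_ρ(x,·)`. -/
def aRho (ρ x : ℝ) (S : ℝ → ℝ) (r : ℝ) : ℝ :=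
  2 * ρ * fRho ρ S r ^ (1 + ρ) * gRho ρ x S r ^ ρ
    / (fRho ρ S r ^ ρ + gRho ρ x S r ^ ρ) ^ 2

/-- `b_ρ(x,·)`. -/
def bRho (ρ x : ℝ) (S : ℝ → ℝ) (r : ℝ) : ℝ :=
  2 * ρ * fRho ρ S r ^ ρ * gRho ρ x S r ^ (1 + ρ)
    / (fRho ρ S r ^ ρ + gRho ρ x S r ^ ρ) ^ 2

namespace Stmt1Aux

lemma exp_rpow' (t s : ℝ) : (exp t) ^ s = exp (t*s) := by
  rw [rpow_def_of_pos (exp_pos t), log_exp]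

lemma abs_log_le_of_mem {A B t : ℝ} (hA : 0 < A) (h1 : A ≤ t) (h2 : t ≤ B) :
    |log t| ≤ |log A| + |log B| := by
  have ht : 0 < t := lt_of_lt_of_le hA h1
  rw [abs_le]
  constructor
  · have := Real.log_le_log hA h1
    have h3 : -|log A| ≤ log A := neg_abs_le _
    linarith [abs_nonneg (log B)]
  · have := Real.log_le_log ht h2
    have h3 : log B ≤ |log B| := le_abs_self _
    linarith [abs_nonneg (log A)]

lemma Tbnd {P Q ρ w ζ L e Λ : ℝ} (hP : 0 < P) (h1 : P ≤ ρ) (h2 : ρ ≤ Q)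
    (hw0 : 0 ≤ w) (hw1 : w ≤ 1) (hζ : |ζ| ≤ (1+Q)/(2*P^2)) (hL : |L| ≤ Λ)
    (he : |e| ≤ |log (2*P)| + |log (2*Q)| + Λ + 2*Real.log 2) :
    |w/(2*ρ^2) + ζ*L + e| ≤
      1/(2*P^2) + (1+Q)/(2*P^2)*Λ + (|log (2*P)| + |log (2*Q)| + Λ + 2*Real.log 2) := by
  have hρ0 : 0 < ρ := lt_of_lt_of_le hP h1
  have hb1 : |w/(2*ρ^2)| ≤ 1/(2*P^2) := by
    rw [abs_of_nonneg (by positivity)]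
    exact div_le_div₀ zero_le_one hw1 (by positivity) (by nlinarith)
  have hΛ : 0 ≤ Λ := le_trans (abs_nonneg _) hL
  have hb2 : |ζ*L| ≤ (1+Q)/(2*P^2)*Λ := by
    rw [abs_mul]
    have hQ0 : (0:ℝ) < Q := lt_of_lt_of_le hρ0 h2
    exact mul_le_mul hζ hL (abs_nonneg _) (div_nonneg (by linarith) (by positivity))
  calc |w/(2*ρ^2) + ζ*L + e| ≤ |w/(2*ρ^2) + ζ*L| + |e| := abs_add_le _ _
    _ ≤ (|w/(2*ρ^2)| + |ζ*L|) + |e| := by linarith [abs_add_le (w/(2*ρ^2)) (ζ*L)]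
    _ ≤ _ := by linarith

variable {ρ : ℝ} {S : ℝ → ℝ}

lemma Ypos (hS : IsSsol ρ 1 S) (u : ℝ) : 0 < S u ^ ρ := rpow_pos_of_pos (hS.1 u) ρ

lemma Yderiv (hρ : 0 < ρ) (hS : IsSsol ρ 1 S) (u : ℝ) :
    HasDerivAt (fun v => S v ^ ρ) (-(8 * ρ^2 * (S u ^ ρ)^2) / (1 + S u ^ ρ) ^ 2) u := by
  have h := (hS.2.2 u).rpow_const (p := ρ) (Or.inl (ne_of_gt (hS.1 u)))
  convert h using 1
  have hpos := hS.1 u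
  have key : S u ^ (1+ρ) * S u ^ (ρ - 1) = (S u ^ ρ)^2 := by
    rw [← Real.rpow_add hpos, ← Real.rpow_natCast (S u ^ ρ) 2, ← Real.rpow_mul hpos.le]
    norm_num; ring_nf
  have hd : (1 + S u ^ ρ)^2 ≠ 0 := by positivity
  field_simp
  nlinarith [key]

lemma Ycont (hρ : 0 < ρ) (hS : IsSsol ρ 1 S) : Continuous (fun u => S u ^ ρ) :=
  continuous_iff_continuousAt.2 fun u => ((Yderiv hρ hS u).differentiableAt).continuousAt

lemma Erel (hρ : 0 < ρ) (hS : IsSsol ρ 1 S) (r : ℝ) :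
    (S r ^ ρ)⁻¹ - S r ^ ρ - 2 * Real.log (S r ^ ρ) = 8 * ρ^2 * r := by
  have hder : ∀ u : ℝ, HasDerivAt
      (fun v => (S v ^ ρ)⁻¹ - S v ^ ρ - 2 * Real.log (S v ^ ρ) - 8*ρ^2*v) 0 u := by
    intro u
    have hY := Yderiv hρ hS u
    have hy : 0 < S u ^ ρ := Ypos hS u
    have h1 := hY.inv (ne_of_gt hy)
    have h2 := (hY.log (ne_of_gt hy)).const_mul 2
    have h3 : HasDerivAt (fun v : ℝ => 8*ρ^2*v) (8*ρ^2) u := by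
      simpa using (hasDerivAt_id u).const_mul (8*ρ^2)
    have h := ((h1.sub hY).sub h2).sub h3
    refine h.congr_deriv ?_
    have hd : (1 + S u ^ ρ)^2 ≠ 0 := by positivity
    field_simp
    ring
  have hconst : ∀ x y : ℝ,
      (fun v => (S v ^ ρ)⁻¹ - S v ^ ρ - 2 * Real.log (S v ^ ρ) - 8*ρ^2*v) x =
      (fun v => (S v ^ ρ)⁻¹ - S v ^ ρ - 2 * Real.log (S v ^ ρ) - 8*ρ^2*v) y :=
    is_const_of_deriv_eq_zero (fun u => (hder u).differentiableAt)
      (fun u => (hder u).deriv)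
  have h0 := hconst r 0
  simp only [hS.2.1, Real.one_rpow] at h0
  simp at h0
  linarith [h0]

lemma Ysq (hS : IsSsol ρ 1 S) (u : ℝ) : S u ^ (2*ρ) = (S u ^ ρ)^2 := by
  have hpos := hS.1 u
  rw [mul_comm, Real.rpow_mul hpos.le, ← Real.rpow_natCast (S u ^ ρ) 2]
  norm_num

lemma fInt (hρ : 0 < ρ) (hS : IsSsol ρ 1 S) (r : ℝ) :
    ∫ u in (0:ℝ)..r, (1 - 2 * (1 + (1 - ρ) * S u ^ ρ) / (1 + S u ^ ρ) ^ 2)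
      = (2 - S r ^ ρ - (S r ^ ρ)⁻¹ - 2*ρ*Real.log (S r ^ ρ))/(8*ρ^2) := by
  have hder : ∀ u : ℝ, HasDerivAt
      (fun v => (2 - S v ^ ρ - (S v ^ ρ)⁻¹ - 2*ρ*Real.log (S v ^ ρ))/(8*ρ^2))
      (1 - 2 * (1 + (1 - ρ) * S u ^ ρ) / (1 + S u ^ ρ) ^ 2) u := by
    intro u
    have hY := Yderiv hρ hS u
    have hy : 0 < S u ^ ρ := Ypos hS u
    have h := ((((hasDerivAt_const u (2:ℝ)).sub hY).sub (hY.inv (ne_of_gt hy))).sub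
      ((hY.log (ne_of_gt hy)).const_mul (2*ρ))).div_const (8*ρ^2)
    refine h.congr_deriv ?_
    have hd : (1 + S u ^ ρ)^2 ≠ 0 := by positivity
    field_simp
    ring
  have hcont : Continuous (fun u => 1 - 2 * (1 + (1 - ρ) * S u ^ ρ) / (1 + S u ^ ρ) ^ 2) := by
    have hY := Ycont hρ hS
    exact continuous_const.sub ((continuous_const.mul
      (continuous_const.add (continuous_const.mul hY))).div
      ((continuous_const.add hY).pow 2)
      (fun u => by have := Ypos hS u; positivity))
  rw [intervalIntegral.integral_eq_sub_of_hasDerivAt (fun u _ => hder u)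
    (hcont.intervalIntegrable 0 r)]
  simp [hS.2.1]; left; ring

lemma gInt (hρ : 0 < ρ) (hS : IsSsol ρ 1 S) (r : ℝ) :
    ∫ u in (0:ℝ)..r, (1 - 2 * ((1 - ρ) * S u ^ ρ + S u ^ (2*ρ)) / (1 + S u ^ ρ) ^ 2)
      = (S r ^ ρ + (S r ^ ρ)⁻¹ - 2 - 2*ρ*Real.log (S r ^ ρ))/(8*ρ^2) := by
  have hder : ∀ u : ℝ, HasDerivAt
      (fun v => (S v ^ ρ + (S v ^ ρ)⁻¹ - 2 - 2*ρ*Real.log (S v ^ ρ))/(8*ρ^2))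
      (1 - 2 * ((1 - ρ) * S u ^ ρ + S u ^ (2*ρ)) / (1 + S u ^ ρ) ^ 2) u := by
    intro u
    have hY := Yderiv hρ hS u
    have hy : 0 < S u ^ ρ := Ypos hS u
    have h := (((hY.add (hY.inv (ne_of_gt hy))).sub (hasDerivAt_const u (2:ℝ))).sub
      ((hY.log (ne_of_gt hy)).const_mul (2*ρ))).div_const (8*ρ^2)
    refine h.congr_deriv ?_
    rw [Ysq hS u]
    have hd : (1 + S u ^ ρ)^2 ≠ 0 := by positivity
    field_simp
    ring
  have hcont : Continuous
      (fun u => 1 - 2 * ((1 - ρ) * S u ^ ρ + S u ^ (2*ρ)) / (1 + S u ^ ρ) ^ 2) := by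
    have hY := Ycont hρ hS
    have hY2 : Continuous (fun u => S u ^ (2*ρ)) := by
      simp only [Ysq hS]; exact hY.pow 2
    exact continuous_const.sub ((continuous_const.mul
      ((continuous_const.mul hY).add hY2)).div
      ((continuous_const.add hY).pow 2)
      (fun u => by have := Ypos hS u; positivity))
  rw [intervalIntegral.integral_eq_sub_of_hasDerivAt (fun u _ => hder u)
    (hcont.intervalIntegrable 0 r)]
  simp [hS.2.1]; left; ring

lemma fRho_exp (hρ : 0 < ρ) (hS : IsSsol ρ 1 S) (r : ℝ) :
    fRho ρ S r
      = exp ((2 - S r ^ ρ - (S r ^ ρ)⁻¹ - 2*ρ*Real.log (S r ^ ρ))/(4*ρ^2)) := by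
  rw [fRho, fInt hρ hS]
  congr 1
  field_simp
  ring

lemma gRho_exp (hρ : 0 < ρ) (hS : IsSsol ρ 1 S) (r : ℝ) :
    gRho ρ 1 S r
      = exp ((2 - S r ^ ρ - (S r ^ ρ)⁻¹ + 2*ρ*Real.log (S r ^ ρ))/(4*ρ^2)) := by
  rw [gRho, gInt hρ hS, one_mul]
  congr 1
  have := (Ypos hS r).ne'
  field_simp
  ring

lemma aRho_eq (hρ : 0 < ρ) (hS : IsSsol ρ 1 S) (r : ℝ) :
    aRho ρ 1 S r = 2*ρ*fRho ρ S r * (S r ^ ρ)/(1 + S r ^ ρ)^2 := by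
  have hy : 0 < S r ^ ρ := Ypos hS r
  have hf : 0 < fRho ρ S r := by rw [fRho_exp hρ hS]; exact exp_pos _
  have hgf : gRho ρ 1 S r ^ ρ = fRho ρ S r ^ ρ * S r ^ ρ := by
    rw [fRho_exp hρ hS, gRho_exp hρ hS, exp_rpow', exp_rpow',
      ← exp_log hy, ← exp_add]
    congr 1
    field_simp
    rw [Real.log_exp]
    ring
  have hf1 : fRho ρ S r ^ (1+ρ) = fRho ρ S r * fRho ρ S r ^ ρ := by
    rw [Real.rpow_add hf, Real.rpow_one]
  have hfρ : 0 < fRho ρ S r ^ ρ := rpow_pos_of_pos hf ρ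
  rw [aRho, hgf, hf1]
  have h1y : (0:ℝ) < 1 + S r ^ ρ := by linarith
  field_simp

lemma bRho_eq (hρ : 0 < ρ) (hS : IsSsol ρ 1 S) (r : ℝ) :
    bRho ρ 1 S r = 2*ρ*gRho ρ 1 S r * (S r ^ ρ)/(1 + S r ^ ρ)^2 := by
  have hy : 0 < S r ^ ρ := Ypos hS r
  have hf : 0 < fRho ρ S r := by rw [fRho_exp hρ hS]; exact exp_pos _
  have hg : 0 < gRho ρ 1 S r := by rw [gRho_exp hρ hS]; exact exp_pos _
  have hgf : gRho ρ 1 S r ^ ρ = fRho ρ S r ^ ρ * S r ^ ρ := by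
    rw [fRho_exp hρ hS, gRho_exp hρ hS, exp_rpow', exp_rpow',
      ← exp_log hy, ← exp_add]
    congr 1
    field_simp
    rw [Real.log_exp]
    ring
  have hg1 : gRho ρ 1 S r ^ (1+ρ) = gRho ρ 1 S r * gRho ρ 1 S r ^ ρ := by
    rw [Real.rpow_add hg, Real.rpow_one]
  have hfρ : 0 < fRho ρ S r ^ ρ := rpow_pos_of_pos hf ρ
  rw [bRho, hg1, hgf]
  have h1y : (0:ℝ) < 1 + S r ^ ρ := by linarith
  field_simp

lemma pos_facts {y u : ℝ} (hρ : 0 < ρ) (hy : 0 < y) (hu : 1 ≤ u)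
    (rel : y⁻¹ - y - 2*Real.log y = 8*ρ^2*u) :
    y ≤ 1 ∧ 1/(8*ρ^2+1) ≤ y*u ∧ y*u ≤ 3/(8*ρ^2) := by
  have hu0 : 0 < u := by linarith
  have hy1 : y ≤ 1 := by
    by_contra h
    push_neg at h
    have l1 : 0 < Real.log y := log_pos h
    have l2 : y⁻¹ < 1 := inv_lt_one_of_one_lt₀ h
    nlinarith [mul_pos (mul_pos (by norm_num : (0:ℝ)<8) (pow_pos hρ 2)) hu0]
  have hly : Real.log y ≤ 0 := log_nonpos hy.le hy1
  refine ⟨hy1, ?_, ?_⟩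
  · have hinv : y⁻¹ ≤ (8*ρ^2+1)*u := by nlinarith
    rw [div_le_iff₀ (by positivity)]
    have h2 := mul_le_mul_of_nonneg_left hinv hy.le
    rw [mul_inv_cancel₀ (ne_of_gt hy)] at h2
    nlinarith
  · have hlog : Real.log y⁻¹ ≤ y⁻¹ - 1 := log_le_sub_one_of_pos (by positivity)
    rw [Real.log_inv] at hlog
    have h8 : 8*ρ^2*u ≤ 3*y⁻¹ := by nlinarith
    rw [le_div_iff₀ (by positivity)]
    have h2 := mul_le_mul_of_nonneg_left h8 hy.le
    have h3 : y * y⁻¹ = 1 := mul_inv_cancel₀ (ne_of_gt hy)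
    nlinarith

lemma neg_facts {y v : ℝ} (hρ : 0 < ρ) (hy : 0 < y) (hv : 1 ≤ v)
    (rel : y + 2*Real.log y - y⁻¹ = 8*ρ^2*v) :
    1 ≤ y ∧ (8/3)*ρ^2 ≤ y/v ∧ y/v ≤ 8*ρ^2+1 := by
  have hv0 : 0 < v := by linarith
  have h1y : 1 ≤ y := by
    by_contra h
    push_neg at h
    have l1 : Real.log y < 0 := log_neg hy h
    have l2 : 1 < y⁻¹ := (one_lt_inv₀ hy).2 h
    nlinarith [mul_pos (mul_pos (by norm_num : (0:ℝ)<8) (pow_pos hρ 2)) hv0]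
  have hly0 : 0 ≤ Real.log y := log_nonneg h1y
  have hlog : Real.log y ≤ y - 1 := log_le_sub_one_of_pos hy
  have hyinv : y⁻¹ ≤ 1 := inv_le_one_of_one_le₀ h1y
  have hyinv0 : 0 < y⁻¹ := by positivity
  refine ⟨h1y, ?_, ?_⟩
  · rw [le_div_iff₀ hv0]
    nlinarith
  · rw [div_le_iff₀ hv0]
    nlinarith

end Stmt1Aux

namespace Stmt1Aux2

lemma final_step {T M : ℝ} (hb : |T| ≤ M) : exp T ∈ Set.Icc (exp (-M)) (exp M) :=
  ⟨exp_le_exp.mpr (abs_le.mp hb).1, exp_le_exp.mpr (abs_le.mp hb).2⟩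

lemma abs_add_sub (a b c : ℝ) : |a + b - c| ≤ |a| + |b| + |c| := by
  have h1 := abs_add_le (a+b) (-c)
  rw [abs_neg, ← sub_eq_add_neg] at h1
  have h2 := abs_add_le a b
  linarith

-- positive side identities
lemma idFpos (ρ y u : ℝ) (hρ : 0 < ρ) (hy : 0 < y)
    (hexu : u = (y⁻¹ - y - 2*Real.log y)/(8*ρ^2)) :
    (2 - y - y⁻¹ - 2*ρ*Real.log y)/(4*ρ^2) + Real.log u * (-((1 + ρ) / (2 * ρ ^ 2))) + 2*u
      = (1-y)/(2*ρ^2) + (-((1+ρ)/(2*ρ^2)))*(Real.log y + Real.log u) + 0 := by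
  have hy' : y ≠ 0 := ne_of_gt hy
  have hρ' : ρ ≠ 0 := ne_of_gt hρ
  rw [hexu]; field_simp; ring

lemma idGpos (ρ y u : ℝ) (hρ : 0 < ρ) (hy : 0 < y)
    (hexu : u = (y⁻¹ - y - 2*Real.log y)/(8*ρ^2)) :
    (2 - y - y⁻¹ + 2*ρ*Real.log y)/(4*ρ^2) + Real.log u * (-((1 - ρ) / (2 * ρ ^ 2))) + 2*u
      = (1-y)/(2*ρ^2) + (-((1-ρ)/(2*ρ^2)))*(Real.log y + Real.log u) + 0 := by
  have hy' : y ≠ 0 := ne_of_gt hy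
  have hρ' : ρ ≠ 0 := ne_of_gt hρ
  rw [hexu]; field_simp; ring

lemma idApos (ρ y u : ℝ) (hρ : 0 < ρ) (hy : 0 < y)
    (hexu : u = (y⁻¹ - y - 2*Real.log y)/(8*ρ^2)) :
    ((2 - y - y⁻¹ - 2*ρ*Real.log y)/(4*ρ^2) + (Real.log (2*ρ) + Real.log y - 2*Real.log (1+y)))
        + Real.log u * (-((1 + ρ) / (2 * ρ ^ 2) - 1)) + 2*u
      = (1-y)/(2*ρ^2) + (-((1+ρ)/(2*ρ^2)))*(Real.log y + Real.log u)
        + (Real.log (2*ρ) + (Real.log y + Real.log u) - 2*Real.log (1+y)) := by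
  have hy' : y ≠ 0 := ne_of_gt hy
  have hρ' : ρ ≠ 0 := ne_of_gt hρ
  rw [hexu]; field_simp; ring

lemma idBpos (ρ y u : ℝ) (hρ : 0 < ρ) (hy : 0 < y)
    (hexu : u = (y⁻¹ - y - 2*Real.log y)/(8*ρ^2)) :
    ((2 - y - y⁻¹ + 2*ρ*Real.log y)/(4*ρ^2) + (Real.log (2*ρ) + Real.log y - 2*Real.log (1+y)))
        + Real.log u * (-((1 - ρ) / (2 * ρ ^ 2) - 1)) + 2*u
      = (1-y)/(2*ρ^2) + (-((1-ρ)/(2*ρ^2)))*(Real.log y + Real.log u)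
        + (Real.log (2*ρ) + (Real.log y + Real.log u) - 2*Real.log (1+y)) := by
  have hy' : y ≠ 0 := ne_of_gt hy
  have hρ' : ρ ≠ 0 := ne_of_gt hρ
  rw [hexu]; field_simp; ring

-- negative side identities
lemma idFneg (ρ y u : ℝ) (hρ : 0 < ρ) (hy : 0 < y)
    (hexu : u = (y⁻¹ - y - 2*Real.log y)/(8*ρ^2)) :
    (2 - y - y⁻¹ - 2*ρ*Real.log y)/(4*ρ^2) + Real.log (-u) * (-((1 - ρ) / (2 * ρ ^ 2))) + 2*(-u)
      = (1-y⁻¹)/(2*ρ^2) + ((1-ρ)/(2*ρ^2))*(Real.log y - Real.log (-u)) + 0 := by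
  have hy' : y ≠ 0 := ne_of_gt hy
  have hρ' : ρ ≠ 0 := ne_of_gt hρ
  rw [hexu]; field_simp; ring

lemma idGneg (ρ y u : ℝ) (hρ : 0 < ρ) (hy : 0 < y)
    (hexu : u = (y⁻¹ - y - 2*Real.log y)/(8*ρ^2)) :
    (2 - y - y⁻¹ + 2*ρ*Real.log y)/(4*ρ^2) + Real.log (-u) * (-((1 + ρ) / (2 * ρ ^ 2))) + 2*(-u)
      = (1-y⁻¹)/(2*ρ^2) + ((1+ρ)/(2*ρ^2))*(Real.log y - Real.log (-u)) + 0 := by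
  have hy' : y ≠ 0 := ne_of_gt hy
  have hρ' : ρ ≠ 0 := ne_of_gt hρ
  rw [hexu]; field_simp; ring

lemma idAneg (ρ y u : ℝ) (hρ : 0 < ρ) (hy : 0 < y)
    (hexu : u = (y⁻¹ - y - 2*Real.log y)/(8*ρ^2)) :
    ((2 - y - y⁻¹ - 2*ρ*Real.log y)/(4*ρ^2) + (Real.log (2*ρ) + Real.log y - 2*Real.log (1+y)))
        + Real.log (-u) * (-((1 - ρ) / (2 * ρ ^ 2) - 1)) + 2*(-u)
      = (1-y⁻¹)/(2*ρ^2) + ((1-ρ)/(2*ρ^2))*(Real.log y - Real.log (-u))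
        + (Real.log (2*ρ) + 2*(Real.log y - Real.log (1+y)) - (Real.log y - Real.log (-u))) := by
  have hy' : y ≠ 0 := ne_of_gt hy
  have hρ' : ρ ≠ 0 := ne_of_gt hρ
  rw [hexu]; field_simp; ring

lemma idBneg (ρ y u : ℝ) (hρ : 0 < ρ) (hy : 0 < y)
    (hexu : u = (y⁻¹ - y - 2*Real.log y)/(8*ρ^2)) :
    ((2 - y - y⁻¹ + 2*ρ*Real.log y)/(4*ρ^2) + (Real.log (2*ρ) + Real.log y - 2*Real.log (1+y)))
        + Real.log (-u) * (-((1 + ρ) / (2 * ρ ^ 2) - 1)) + 2*(-u)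
      = (1-y⁻¹)/(2*ρ^2) + ((1+ρ)/(2*ρ^2))*(Real.log y - Real.log (-u))
        + (Real.log (2*ρ) + 2*(Real.log y - Real.log (1+y)) - (Real.log y - Real.log (-u))) := by
  have hy' : y ≠ 0 := ne_of_gt hy
  have hρ' : ρ ≠ 0 := ne_of_gt hρ
  rw [hexu]; field_simp; ring

end Stmt1Aux2


open Stmt1Aux Stmt1Aux2 in
set_option maxHeartbeats 1000000 in
theorem stmt1 (K : Set ℝ) (hK : IsCompact K) (hKsub : K ⊆ Set.Ioi (0:ℝ)) :
    ∃ c C u₀ : ℝ, 0 < c ∧ c ≤ C ∧ 0 < u₀ ∧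
      ∀ ρ ∈ K, ∀ S : ℝ → ℝ, IsSsol ρ 1 S →
        (∀ u : ℝ, u₀ ≤ u →
          fRho ρ S u * u ^ (-((1 + ρ) / (2 * ρ ^ 2))) * Real.exp (2 * u) ∈ Set.Icc c C ∧
          gRho ρ 1 S u * u ^ (-((1 - ρ) / (2 * ρ ^ 2))) * Real.exp (2 * u) ∈ Set.Icc c C ∧
          aRho ρ 1 S u * u ^ (-((1 + ρ) / (2 * ρ ^ 2) - 1)) * Real.exp (2 * u) ∈ Set.Icc c C ∧
          bRho ρ 1 S u * u ^ (-((1 - ρ) / (2 * ρ ^ 2) - 1)) * Real.exp (2 * u) ∈ Set.Icc c C) ∧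
        (∀ u : ℝ, u ≤ -u₀ →
          fRho ρ S u * |u| ^ (-((1 - ρ) / (2 * ρ ^ 2))) * Real.exp (2 * |u|) ∈ Set.Icc c C ∧
          gRho ρ 1 S u * |u| ^ (-((1 + ρ) / (2 * ρ ^ 2))) * Real.exp (2 * |u|) ∈ Set.Icc c C ∧
          aRho ρ 1 S u * |u| ^ (-((1 - ρ) / (2 * ρ ^ 2) - 1)) * Real.exp (2 * |u|) ∈ Set.Icc c C ∧
          bRho ρ 1 S u * |u| ^ (-((1 + ρ) / (2 * ρ ^ 2) - 1)) * Real.exp (2 * |u|) ∈ Set.Icc c C) := by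
  rcases Set.eq_empty_or_nonempty K with hK0 | hne
  · refine ⟨1, 1, 1, one_pos, le_rfl, one_pos, ?_⟩
    intro ρ hρ
    rw [hK0] at hρ
    exact absurd hρ (Set.notMem_empty ρ)
  set P := sInf K with hPdef
  set Q := sSup K with hQdef
  have hPK : P ∈ K := hK.sInf_mem hne
  have hQK : Q ∈ K := hK.sSup_mem hne
  have hP : 0 < P := hKsub hPK
  have hPQ : P ≤ Q := csInf_le_csSup hne hK.bddBelow hK.bddAbove
  have hQ : 0 < Q := lt_of_lt_of_le hP hPQ
  have hl2 : 0 ≤ Real.log 2 := Real.log_nonneg one_le_two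
  set Λ : ℝ := |Real.log (1/(8*Q^2+1))| + |Real.log (3/(8*P^2))|
      + |Real.log ((8/3)*P^2)| + |Real.log (8*Q^2+1)| with hΛdef
  have hΛ0 : 0 ≤ Λ := by rw [hΛdef]; positivity
  set M : ℝ := 1/(2*P^2) + (1+Q)/(2*P^2)*Λ
      + (|Real.log (2*P)| + |Real.log (2*Q)| + Λ + 2*Real.log 2) with hMdef
  have hMRnn : 0 ≤ |Real.log (2*P)| + |Real.log (2*Q)| + Λ + 2*Real.log 2 := by
    have := abs_nonneg (Real.log (2*P))
    have := abs_nonneg (Real.log (2*Q))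
    linarith
  have hM0 : 0 ≤ M := by
    rw [hMdef]
    have h1 : 0 ≤ (1+Q)/(2*P^2)*Λ := mul_nonneg (div_nonneg (by linarith) (by positivity)) hΛ0
    have h2 : 0 ≤ 1/(2*P^2) := by positivity
    exact add_nonneg (add_nonneg h2 h1) hMRnn
  refine ⟨Real.exp (-M), Real.exp M, 1, Real.exp_pos _,
    Real.exp_le_exp.mpr (by linarith), one_pos, ?_⟩
  intro ρ hρK S hS
  have hPρ : P ≤ ρ := csInf_le hK.bddBelow hρK
  have hρQ : ρ ≤ Q := le_csSup hK.bddAbove hρK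
  have hρ0 : 0 < ρ := lt_of_lt_of_le hP hPρ
  have hPρ2 : P^2 ≤ ρ^2 := pow_le_pow_left₀ hP.le hPρ 2
  have hρQ2 : ρ^2 ≤ Q^2 := pow_le_pow_left₀ hρ0.le hρQ 2
  have hζf : |(1+ρ)/(2*ρ^2)| ≤ (1+Q)/(2*P^2) := by
    rw [abs_of_pos (by positivity)]
    exact div_le_div₀ (by linarith) (by linarith) (by positivity) (by linarith [hPρ2])
  have hζg : |(1-ρ)/(2*ρ^2)| ≤ (1+Q)/(2*P^2) := by
    rw [abs_div, abs_of_pos (show (0:ℝ) < 2*ρ^2 by positivity)]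
    refine div_le_div₀ (by linarith) ?_ (by positivity) (by linarith [hPρ2])
    exact abs_le.mpr ⟨by linarith, by linarith⟩
  have h2ρlog : |Real.log (2*ρ)| ≤ |Real.log (2*P)| + |Real.log (2*Q)| :=
    abs_log_le_of_mem (by positivity) (by linarith) (by linarith)
  constructor
  · -- positive side
    intro u hu
    have hu0 : (0:ℝ) < u := by linarith
    have hy : 0 < S u ^ ρ := Ypos hS u
    have rel : (S u ^ ρ)⁻¹ - S u ^ ρ - 2*Real.log (S u ^ ρ) = 8*ρ^2*u := Erel hρ0 hS u
    obtain ⟨hy1, hyu1, hyu2⟩ := pos_facts hρ0 hy hu rel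
    have hexu : u = ((S u ^ ρ)⁻¹ - S u ^ ρ - 2*Real.log (S u ^ ρ))/(8*ρ^2) := by
      rw [eq_div_iff (by positivity : (8:ℝ)*ρ^2 ≠ 0)]
      linarith [rel]
    have hw0 : 0 ≤ 1 - S u ^ ρ := by linarith
    have hw1 : 1 - S u ^ ρ ≤ 1 := by linarith
    have hLa : 1/(8*Q^2+1) ≤ S u ^ ρ * u :=
      le_trans (div_le_div₀ zero_le_one le_rfl (by positivity) (by linarith [hρQ2])) hyu1
    have hLb : S u ^ ρ * u ≤ 3/(8*P^2) :=
      le_trans hyu2 (div_le_div₀ (by norm_num) le_rfl (by positivity) (by linarith [hPρ2]))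
    have hL : |Real.log (S u ^ ρ) + Real.log u| ≤ Λ := by
      rw [← Real.log_mul (ne_of_gt hy) (ne_of_gt hu0)]
      refine le_trans (abs_log_le_of_mem (by positivity) hLa hLb) ?_
      rw [hΛdef]
      have := abs_nonneg (Real.log ((8/3)*P^2))
      have := abs_nonneg (Real.log (8*Q^2+1))
      linarith
    have hl1y : |Real.log (1 + S u ^ ρ)| ≤ Real.log 2 := by
      rw [abs_of_nonneg (Real.log_nonneg (by linarith))]
      exact Real.log_le_log (by linarith) (by linarith)
    have he0 : |(0:ℝ)| ≤ |Real.log (2*P)| + |Real.log (2*Q)| + Λ + 2*Real.log 2 := by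
      rw [abs_zero]; exact hMRnn
    have heab : |Real.log (2*ρ) + (Real.log (S u ^ ρ) + Real.log u) - 2*Real.log (1 + S u ^ ρ)|
        ≤ |Real.log (2*P)| + |Real.log (2*Q)| + Λ + 2*Real.log 2 := by
      have h3 := abs_add_sub (Real.log (2*ρ)) (Real.log (S u ^ ρ) + Real.log u)
        (2*Real.log (1 + S u ^ ρ))
      have h4 : |2*Real.log (1 + S u ^ ρ)| ≤ 2*Real.log 2 := by
        rw [abs_mul, abs_two]; linarith
      linarith
    have hD : 2*ρ*Real.exp ((2 - S u ^ ρ - (S u ^ ρ)⁻¹ - 2*ρ*Real.log (S u ^ ρ))/(4*ρ^2))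
          * (S u ^ ρ)/(1 + S u ^ ρ)^2
        = Real.exp ((2 - S u ^ ρ - (S u ^ ρ)⁻¹ - 2*ρ*Real.log (S u ^ ρ))/(4*ρ^2)
          + (Real.log (2*ρ) + Real.log (S u ^ ρ) - 2*Real.log (1 + S u ^ ρ))) := by
      have h2l : Real.exp (2*Real.log (1 + S u ^ ρ)) = (1 + S u ^ ρ)^2 := by
        rw [two_mul, Real.exp_add, Real.exp_log (by linarith only [hy])]
        ring
      rw [Real.exp_add, Real.exp_sub, Real.exp_add, Real.exp_log (by positivity : (0:ℝ) < 2*ρ),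
        Real.exp_log hy, h2l]
      ring
    have hDg : 2*ρ*Real.exp ((2 - S u ^ ρ - (S u ^ ρ)⁻¹ + 2*ρ*Real.log (S u ^ ρ))/(4*ρ^2))
          * (S u ^ ρ)/(1 + S u ^ ρ)^2
        = Real.exp ((2 - S u ^ ρ - (S u ^ ρ)⁻¹ + 2*ρ*Real.log (S u ^ ρ))/(4*ρ^2)
          + (Real.log (2*ρ) + Real.log (S u ^ ρ) - 2*Real.log (1 + S u ^ ρ))) := by
      have h2l : Real.exp (2*Real.log (1 + S u ^ ρ)) = (1 + S u ^ ρ)^2 := by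
        rw [two_mul, Real.exp_add, Real.exp_log (by linarith only [hy])]
        ring
      rw [Real.exp_add, Real.exp_sub, Real.exp_add, Real.exp_log (by positivity : (0:ℝ) < 2*ρ),
        Real.exp_log hy, h2l]
      ring
    refine ⟨?_, ?_, ?_, ?_⟩
    · rw [fRho_exp hρ0 hS, Real.rpow_def_of_pos hu0, ← Real.exp_add, ← Real.exp_add,
        idFpos ρ (S u ^ ρ) u hρ0 hy hexu]
      apply final_step
      rw [hMdef]
      exact Tbnd hP hPρ hρQ hw0 hw1 (by rw [abs_neg]; exact hζf) hL he0
    · rw [gRho_exp hρ0 hS, Real.rpow_def_of_pos hu0, ← Real.exp_add, ← Real.exp_add,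
        idGpos ρ (S u ^ ρ) u hρ0 hy hexu]
      apply final_step
      rw [hMdef]
      exact Tbnd hP hPρ hρQ hw0 hw1 (by rw [abs_neg]; exact hζg) hL he0
    · rw [aRho_eq hρ0 hS, fRho_exp hρ0 hS, hD, Real.rpow_def_of_pos hu0,
        ← Real.exp_add, ← Real.exp_add, idApos ρ (S u ^ ρ) u hρ0 hy hexu]
      apply final_step
      rw [hMdef]
      exact Tbnd hP hPρ hρQ hw0 hw1 (by rw [abs_neg]; exact hζf) hL heab
    · rw [bRho_eq hρ0 hS, gRho_exp hρ0 hS, hDg, Real.rpow_def_of_pos hu0,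
        ← Real.exp_add, ← Real.exp_add, idBpos ρ (S u ^ ρ) u hρ0 hy hexu]
      apply final_step
      rw [hMdef]
      exact Tbnd hP hPρ hρQ hw0 hw1 (by rw [abs_neg]; exact hζg) hL heab
  · -- negative side
    intro u hu
    have hnu0 : (0:ℝ) < -u := by linarith
    have hvu : (1:ℝ) ≤ -u := by linarith
    have habs : |u| = -u := abs_of_neg (by linarith)
    have hy : 0 < S u ^ ρ := Ypos hS u
    have rel : (S u ^ ρ)⁻¹ - S u ^ ρ - 2*Real.log (S u ^ ρ) = 8*ρ^2*u := Erel hρ0 hS u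
    have rel' : S u ^ ρ + 2*Real.log (S u ^ ρ) - (S u ^ ρ)⁻¹ = 8*ρ^2*(-u) := by
      linarith [rel]
    obtain ⟨h1y, hq1, hq2⟩ := neg_facts hρ0 hy hvu rel'
    have hexu : u = ((S u ^ ρ)⁻¹ - S u ^ ρ - 2*Real.log (S u ^ ρ))/(8*ρ^2) := by
      rw [eq_div_iff (by positivity : (8:ℝ)*ρ^2 ≠ 0)]
      linarith [rel]
    have hyi : (S u ^ ρ)⁻¹ ≤ 1 := inv_le_one_of_one_le₀ h1y
    have hyi0 : 0 < (S u ^ ρ)⁻¹ := by positivity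
    have hw0 : 0 ≤ 1 - (S u ^ ρ)⁻¹ := by linarith
    have hw1 : 1 - (S u ^ ρ)⁻¹ ≤ 1 := by linarith
    have hLa : (8/3)*P^2 ≤ S u ^ ρ / (-u) := le_trans (by linarith [hPρ2]) hq1
    have hLb : S u ^ ρ / (-u) ≤ 8*Q^2+1 := le_trans hq2 (by linarith [hρQ2])
    have hL : |Real.log (S u ^ ρ) - Real.log (-u)| ≤ Λ := by
      rw [← Real.log_div (ne_of_gt hy) (ne_of_gt hnu0)]
      refine le_trans (abs_log_le_of_mem (by positivity) hLa hLb) ?_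
      rw [hΛdef]
      have := abs_nonneg (Real.log (1/(8*Q^2+1)))
      have := abs_nonneg (Real.log (3/(8*P^2)))
      linarith
    have hl1y : |Real.log (S u ^ ρ) - Real.log (1 + S u ^ ρ)| ≤ Real.log 2 := by
      have e1 : Real.log (S u ^ ρ) - Real.log (1 + S u ^ ρ)
          = -(Real.log ((1 + S u ^ ρ)/(S u ^ ρ))) := by
        rw [Real.log_div (by linarith : (1:ℝ) + S u ^ ρ ≠ 0) (ne_of_gt hy)]
        ring
      rw [e1, abs_neg, abs_of_nonneg (Real.log_nonneg ((one_le_div hy).mpr (by linarith)))]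
      refine Real.log_le_log (by positivity) ?_
      rw [div_le_iff₀ hy]
      linarith
    have he0 : |(0:ℝ)| ≤ |Real.log (2*P)| + |Real.log (2*Q)| + Λ + 2*Real.log 2 := by
      rw [abs_zero]; exact hMRnn
    have heab : |Real.log (2*ρ) + 2*(Real.log (S u ^ ρ) - Real.log (1 + S u ^ ρ))
          - (Real.log (S u ^ ρ) - Real.log (-u))|
        ≤ |Real.log (2*P)| + |Real.log (2*Q)| + Λ + 2*Real.log 2 := by
      have h3 := abs_add_sub (Real.log (2*ρ))
        (2*(Real.log (S u ^ ρ) - Real.log (1 + S u ^ ρ)))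
        (Real.log (S u ^ ρ) - Real.log (-u))
      have h4 : |2*(Real.log (S u ^ ρ) - Real.log (1 + S u ^ ρ))| ≤ 2*Real.log 2 := by
        rw [abs_mul, abs_two]; linarith only [hl1y]
      linarith only [h3, h4, h2ρlog, hL]
    have hD : 2*ρ*Real.exp ((2 - S u ^ ρ - (S u ^ ρ)⁻¹ - 2*ρ*Real.log (S u ^ ρ))/(4*ρ^2))
          * (S u ^ ρ)/(1 + S u ^ ρ)^2
        = Real.exp ((2 - S u ^ ρ - (S u ^ ρ)⁻¹ - 2*ρ*Real.log (S u ^ ρ))/(4*ρ^2)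
          + (Real.log (2*ρ) + Real.log (S u ^ ρ) - 2*Real.log (1 + S u ^ ρ))) := by
      have h2l : Real.exp (2*Real.log (1 + S u ^ ρ)) = (1 + S u ^ ρ)^2 := by
        rw [two_mul, Real.exp_add, Real.exp_log (by linarith only [hy])]
        ring
      rw [Real.exp_add, Real.exp_sub, Real.exp_add, Real.exp_log (by positivity : (0:ℝ) < 2*ρ),
        Real.exp_log hy, h2l]
      ring
    have hDg : 2*ρ*Real.exp ((2 - S u ^ ρ - (S u ^ ρ)⁻¹ + 2*ρ*Real.log (S u ^ ρ))/(4*ρ^2))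
          * (S u ^ ρ)/(1 + S u ^ ρ)^2
        = Real.exp ((2 - S u ^ ρ - (S u ^ ρ)⁻¹ + 2*ρ*Real.log (S u ^ ρ))/(4*ρ^2)
          + (Real.log (2*ρ) + Real.log (S u ^ ρ) - 2*Real.log (1 + S u ^ ρ))) := by
      have h2l : Real.exp (2*Real.log (1 + S u ^ ρ)) = (1 + S u ^ ρ)^2 := by
        rw [two_mul, Real.exp_add, Real.exp_log (by linarith only [hy])]
        ring
      rw [Real.exp_add, Real.exp_sub, Real.exp_add, Real.exp_log (by positivity : (0:ℝ) < 2*ρ),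
        Real.exp_log hy, h2l]
      ring
    refine ⟨?_, ?_, ?_, ?_⟩
    · rw [habs, fRho_exp hρ0 hS, Real.rpow_def_of_pos hnu0, ← Real.exp_add, ← Real.exp_add,
        idFneg ρ (S u ^ ρ) u hρ0 hy hexu]
      apply final_step
      rw [hMdef]
      exact Tbnd hP hPρ hρQ hw0 hw1 hζg hL he0
    · rw [habs, gRho_exp hρ0 hS, Real.rpow_def_of_pos hnu0, ← Real.exp_add, ← Real.exp_add,
        idGneg ρ (S u ^ ρ) u hρ0 hy hexu]
      apply final_step
      rw [hMdef]
      exact Tbnd hP hPρ hρQ hw0 hw1 hζf hL he0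
    · rw [habs, aRho_eq hρ0 hS, fRho_exp hρ0 hS, hD, Real.rpow_def_of_pos hnu0,
        ← Real.exp_add, ← Real.exp_add, idAneg ρ (S u ^ ρ) u hρ0 hy hexu]
      apply final_step
      rw [hMdef]
      exact Tbnd hP hPρ hρQ hw0 hw1 hζg hL heab
    · rw [habs, bRho_eq hρ0 hS, gRho_exp hρ0 hS, hDg, Real.rpow_def_of_pos hnu0,
        ← Real.exp_add, ← Real.exp_add, idBneg ρ (S u ^ ρ) u hρ0 hy hexu]
      apply final_step
      rw [hMdef]
      exact Tbnd hP hPρ hρQ hw0 hw1 hζf hL heab
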